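/- For all real x, the Bessel function J₀(x) = Σ_{r=0}^∞ (-1)^r (x/2)^(2r) / (r!)², and for α, β, x real with |α x| + |β| x² < 1, one has J₀(2√(α x + β x²)) = Σ_{n=0}^∞ x^n · ₂U_n(α,β), where ₂U_n(α,β) := (-1)^n Σ_{r=0}^{⌊n/2⌋} (-1)^r α^(n-2r) β^r / ((n-2r)! (n-r)! r!). -/

import Mathlib

open Real Finset

noncomputable def besselJ0 (z : ℝ) : ℝ :=
  ∑' r : ℕ, (-1 : ℝ) ^ r * (z / 2) ^ (2 * r) / ((Nat.factorial r : ℝ)) ^ 2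

noncomputable def twoU (n : ℕ) (α β : ℝ) : ℝ :=
  (-1 : ℝ) ^ n *
    ∑ r ∈ Finset.range (n / 2 + 1),
      (-1 : ℝ) ^ r * α ^ (n - 2 * r) * β ^ r /
        ((Nat.factorial (n - 2 * r) : ℝ) * (Nat.factorial (n - r) : ℝ) * (Nat.factorial r : ℝ))

/-- The double-indexed family whose rearrangements give both sides. -/
noncomputable def fAux (α β x : ℝ) (p : ℕ × ℕ) : ℝ :=
  (-1 : ℝ) ^ (p.1 + p.2) * (α * x) ^ p.1 * (β * x ^ 2) ^ p.2 /
    ((Nat.factorial p.1 : ℝ) * (Nat.factorial (p.1 + p.2) : ℝ) * (Nat.factorial p.2 : ℝ))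

def e1 : (Σ r : ℕ, Fin (r + 1)) ≃ ℕ × ℕ where
  toFun p := (p.1 - p.2.val, p.2.val)
  invFun q := ⟨q.1 + q.2, ⟨q.2, by omega⟩⟩
  left_inv := by
    rintro ⟨r, k⟩
    have hk : k.val ≤ r := Nat.lt_succ_iff.mp k.isLt
    have h : r - k.val + k.val = r := by omega
    dsimp only
    refine Sigma.ext h ?_
    rw [Fin.heq_ext_iff (by dsimp only; omega)]
  right_inv := by
    rintro ⟨m, k⟩
    simp

def e2 : (Σ n : ℕ, Fin (n / 2 + 1)) ≃ ℕ × ℕ where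
  toFun p := (p.1 - 2 * p.2.val, p.2.val)
  invFun q := ⟨q.1 + 2 * q.2, ⟨q.2, by omega⟩⟩
  left_inv := by
    rintro ⟨n, k⟩
    have hk : k.val ≤ n / 2 := Nat.lt_succ_iff.mp k.isLt
    have h : n - 2 * k.val + 2 * k.val = n := by omega
    dsimp only
    refine Sigma.ext h ?_
    rw [Fin.heq_ext_iff (by dsimp only; omega)]
  right_inv := by
    rintro ⟨m, k⟩
    simp

lemma fiberA (α β x : ℝ) (r : ℕ) :
    HasSum (fun k : Fin (r + 1) => fAux α β x (r - k.val, k.val))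
      ((-(α * x + β * x ^ 2)) ^ r / ((Nat.factorial r : ℝ)) ^ 2) := by
  have key : ∑ k : Fin (r + 1), fAux α β x (r - k.val, k.val)
      = (-(α * x + β * x ^ 2)) ^ r / ((Nat.factorial r : ℝ)) ^ 2 := by
    rw [Fin.sum_univ_eq_sum_range (fun j => fAux α β x (r - j, j)) (r + 1)]
    have hw : (-(α * x + β * x ^ 2)) ^ r = (-1 : ℝ) ^ r * (β * x ^ 2 + α * x) ^ r := by
      rw [neg_pow]; ring_nf
    rw [hw, add_pow, Finset.mul_sum, Finset.sum_div]
    apply Finset.sum_congr rfl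
    intro k hk
    rw [Finset.mem_range, Nat.lt_succ_iff] at hk
    have h1 : r - k + k = r := Nat.sub_add_cancel hk
    have f1 : ((Nat.factorial (r - k) : ℝ)) ≠ 0 := Nat.cast_ne_zero.mpr (Nat.factorial_ne_zero _)
    have f2 : ((Nat.factorial r : ℝ)) ≠ 0 := Nat.cast_ne_zero.mpr (Nat.factorial_ne_zero _)
    have f3 : ((Nat.factorial k : ℝ)) ≠ 0 := Nat.cast_ne_zero.mpr (Nat.factorial_ne_zero _)
    simp only [fAux, h1]
    rw [Nat.cast_choose ℝ hk]
    field_simp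
  exact key ▸ hasSum_fintype _

lemma fiberB (α β x : ℝ) (n : ℕ) :
    HasSum (fun k : Fin (n / 2 + 1) => fAux α β x (n - 2 * k.val, k.val))
      (x ^ n * twoU n α β) := by
  have key : ∑ k : Fin (n / 2 + 1), fAux α β x (n - 2 * k.val, k.val)
      = x ^ n * twoU n α β := by
    rw [Fin.sum_univ_eq_sum_range (fun j => fAux α β x (n - 2 * j, j)) (n / 2 + 1), twoU, ← mul_assoc, Finset.mul_sum]
    apply Finset.sum_congr rfl
    intro k hk
    rw [Finset.mem_range, Nat.lt_succ_iff] at hk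
    have h2k : 2 * k ≤ n := by omega
    have hkn : k ≤ n := by omega
    have h1 : n - 2 * k + k = n - k := by omega
    have hs : (-1 : ℝ) ^ (n - k) = (-1) ^ n * (-1) ^ k := by
      have h : (-1 : ℝ) ^ (n - k) * (-1) ^ k = (-1) ^ n := by
        rw [← pow_add, Nat.sub_add_cancel hkn]
      calc (-1 : ℝ) ^ (n - k) = (-1 : ℝ) ^ (n - k) * ((-1) ^ k * (-1) ^ k) := by
            rw [← pow_add, ← two_mul, pow_mul]; norm_num
        _ = (-1) ^ n * (-1) ^ k := by rw [← mul_assoc, h]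
    have hxp : x ^ (n - 2 * k) * x ^ (2 * k) = x ^ n := by
      rw [← pow_add, Nat.sub_add_cancel h2k]
    simp only [fAux, h1]
    set D : ℝ := (Nat.factorial (n - 2 * k) : ℝ) * (Nat.factorial (n - k) : ℝ) *
      (Nat.factorial k : ℝ) with hD
    trans (((-1 : ℝ)) ^ n * (-1) ^ k * α ^ (n - 2 * k) * β ^ k / D) *
      (x ^ (n - 2 * k) * x ^ (2 * k))
    · rw [hs, mul_pow, mul_pow, ← pow_mul]
      ring
    · rw [hxp]
      ring
  exact key ▸ hasSum_fintype _

lemma summable_fAux (α β x : ℝ) (hα : |α * x| < 1) (hβ : |β| * x ^ 2 < 1) :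
    Summable (fAux α β x) := by
  have hb : Summable (fun p : ℕ × ℕ => |α * x| ^ p.1 * (|β| * x ^ 2) ^ p.2) :=
    Summable.mul_of_nonneg (summable_geometric_of_lt_one (abs_nonneg _) hα)
      (summable_geometric_of_lt_one (by positivity) hβ)
      (fun m => by positivity) (fun k => by positivity)
  apply Summable.of_abs
  refine hb.of_nonneg_of_le (fun p => abs_nonneg _) ?_
  rintro ⟨m, k⟩
  have h1 : (1 : ℝ) ≤ (Nat.factorial m : ℝ) := Nat.one_le_cast.mpr m.factorial_pos
  have h2 : (1 : ℝ) ≤ (Nat.factorial (m + k) : ℝ) := Nat.one_le_cast.mpr (m + k).factorial_pos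
  have h3 : (1 : ℝ) ≤ (Nat.factorial k : ℝ) := Nat.one_le_cast.mpr k.factorial_pos
  have h12 : (1 : ℝ) ≤ (Nat.factorial m : ℝ) * (Nat.factorial (m + k) : ℝ) := by nlinarith
  have hD : (1 : ℝ) ≤ (Nat.factorial m : ℝ) * (Nat.factorial (m + k) : ℝ) *
      (Nat.factorial k : ℝ) := by nlinarith
  have hD0 : (0 : ℝ) ≤ (Nat.factorial m : ℝ) * (Nat.factorial (m + k) : ℝ) *
      (Nat.factorial k : ℝ) := by positivity
  have habs : |fAux α β x (m, k)| = |α * x| ^ m * (|β| * x ^ 2) ^ k /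
      ((Nat.factorial m : ℝ) * (Nat.factorial (m + k) : ℝ) * (Nat.factorial k : ℝ)) := by
    simp only [fAux]
    rw [abs_div, abs_mul ((-1 : ℝ) ^ (m + k) * (α * x) ^ m) ((β * x ^ 2) ^ k),
      abs_mul ((-1 : ℝ) ^ (m + k)) ((α * x) ^ m), abs_pow, abs_neg, abs_one, one_pow, one_mul,
      abs_pow, abs_pow, abs_mul β (x ^ 2), abs_of_nonneg (sq_nonneg x), abs_of_nonneg hD0]
  rw [habs]
  exact div_le_self (by positivity) hD

theorem besselJ0_twoU (x α β : ℝ) (h : |α * x| + |β| * x ^ 2 < 1) :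
    (∀ z : ℝ, besselJ0 z =
      ∑' r : ℕ, (-1 : ℝ) ^ r * (z / 2) ^ (2 * r) / ((Nat.factorial r : ℝ)) ^ 2) ∧
    HasSum (fun n : ℕ => x ^ n * twoU n α β)
      (∑' r : ℕ, (-(α * x + β * x ^ 2)) ^ r / ((Nat.factorial r : ℝ)) ^ 2) := by
  have hβ0 : 0 ≤ |β| * x ^ 2 := by positivity
  have hα : |α * x| < 1 := by linarith [abs_nonneg (α * x)]
  have hβ : |β| * x ^ 2 < 1 := by linarith [abs_nonneg (α * x)]
  refine ⟨fun z => rfl, ?_⟩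
  have hf := summable_fAux α β x hα hβ
  have hS : HasSum (fAux α β x) (∑' p, fAux α β x p) := hf.hasSum
  have hA : HasSum (fun r : ℕ => (-(α * x + β * x ^ 2)) ^ r / ((Nat.factorial r : ℝ)) ^ 2)
      (∑' p, fAux α β x p) :=
    HasSum.sigma ((e1.hasSum_iff).mpr hS) (fun r => fiberA α β x r)
  have hB : HasSum (fun n : ℕ => x ^ n * twoU n α β) (∑' p, fAux α β x p) :=
    HasSum.sigma ((e2.hasSum_iff).mpr hS) (fun n => fiberB α β x n)
  rwa [← hA.tsum_eq] at hB
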